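/- arXiv:2409.09223 — 4 statements merged into one kernel-verified Lean document; each statement's English description precedes it below -/
import Mathlib

section
/- Soundness of existential instantiation with a fresh witness: let φ = ∃x·p(x) be a formula, c a fresh constant not occurring in the formula set R, and l a Boolean variable defined by the definition clauses for φ. Then R ∪ {l → φ, ¬l → ¬φ} is satisfiable if and only if R ∪ {l → φ, ¬l → ¬φ, l → p(c), ¬l → ¬p(c)} is satisfiable. -/
/-- Terms: variables or constant symbols. -/
inductive Tm where
  | var : ℕ → Tm
  | const : ℕ → Tm

/-- First-order formulas over terms. -/
inductive Fm where
  | atom : ℕ → List Tm → Fm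
  | neg : Fm → Fm
  | and : Fm → Fm → Fm
  | or  : Fm → Fm → Fm
  | ex  : ℕ → Fm → Fm
  | all : ℕ → Fm → Fm

def Tm.eval {D : Type*} (cI : ℕ → D) (v : ℕ → D) : Tm → D
  | var x => v x
  | const c => cI c

def Fm.Sat {D : Type*} (I : ℕ → List D → Prop) (cI : ℕ → D) :
    (ℕ → D) → Fm → Prop
  | v, atom p ts => I p (ts.map (Tm.eval cI v))
  | v, neg φ => ¬ Fm.Sat I cI v φ
  | v, and φ ψ => Fm.Sat I cI v φ ∧ Fm.Sat I cI v ψ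
  | v, or φ ψ => Fm.Sat I cI v φ ∨ Fm.Sat I cI v ψ
  | v, ex x φ => ∃ d : D, Fm.Sat I cI (Function.update v x d) φ
  | v, all x φ => ∀ d : D, Fm.Sat I cI (Function.update v x d) φ

def Tm.consts : Tm → Finset ℕ
  | var _ => ∅
  | const c => {c}

def Fm.consts : Fm → Finset ℕ
  | atom _ ts => ts.foldr (fun t acc => t.consts ∪ acc) ∅
  | neg φ => φ.consts
  | and φ ψ => φ.consts ∪ ψ.consts
  | or φ ψ => φ.consts ∪ ψ.consts
  | ex _ φ => φ.consts
  | all _ φ => φ.consts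

/-- Substitute the constant `c` for the free variable `x`. -/
def Tm.substC (x c : ℕ) : Tm → Tm
  | var y => if y = x then const c else var y
  | const d => const d

def Fm.substC (x c : ℕ) : Fm → Fm
  | atom p ts => atom p (ts.map (Tm.substC x c))
  | neg φ => neg (φ.substC x c)
  | and φ ψ => and (φ.substC x c) (ψ.substC x c)
  | or φ ψ => or (φ.substC x c) (ψ.substC x c)
  | ex y φ => ex y (if y = x then φ else φ.substC x c)
  | all y φ => all y (if y = x then φ else φ.substC x c)

/-- Implication `a → b` as a formula. -/
def Fm.imp (a b : Fm) : Fm := .or (.neg a) b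

/-- Satisfiability of a set of formulas over some nonempty domain. -/
def SatSet (S : Set Fm) : Prop :=
  ∃ (D : Type) (_ : Nonempty D) (I : ℕ → List D → Prop) (cI : ℕ → D)
    (v : ℕ → D), ∀ φ ∈ S, Fm.Sat I cI v φ

lemma Tm.eval_update_fresh {D : Type*} (cI : ℕ → D) (v : ℕ → D) (c : ℕ) (d : D)
    (t : Tm) (h : c ∉ t.consts) :
    Tm.eval (Function.update cI c d) v t = Tm.eval cI v t := by
  cases t with
  | var y => rfl
  | const e =>
    simp [Tm.consts] at h
    simp [Tm.eval, Function.update_of_ne (Ne.symm h)]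

lemma consts_mem_foldr (c : ℕ) :
    ∀ (ts : List Tm) (t : Tm), t ∈ ts → c ∈ t.consts →
      c ∈ List.foldr (fun t acc => Tm.consts t ∪ acc) ∅ ts
  | [], t, ht, _ => absurd ht (List.not_mem_nil (a := t))
  | a :: l, t, ht, hc => by
    rcases List.mem_cons.mp ht with rfl | ht'
    · exact Finset.mem_union_left _ hc
    · exact Finset.mem_union_right _ (consts_mem_foldr c l t ht' hc)

lemma Fm.sat_update_fresh {D : Type*} (I : ℕ → List D → Prop) (cI : ℕ → D)
    (c : ℕ) (d : D) :
    ∀ (φ : Fm) (v : ℕ → D), c ∉ φ.consts →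
    (Fm.Sat I (Function.update cI c d) v φ ↔ Fm.Sat I cI v φ) := by
  intro φ
  induction φ with
  | atom q ts =>
    intro v h
    have hts : ∀ t ∈ ts, c ∉ t.consts :=
      fun t ht hc => h (consts_mem_foldr c ts t ht hc)
    simp only [Fm.Sat]
    have : ts.map (Tm.eval (Function.update cI c d) v) = ts.map (Tm.eval cI v) :=
      List.map_congr_left fun t ht => Tm.eval_update_fresh cI v c d t (hts t ht)
    rw [this]
  | neg φ ih => intro v h; simp only [Fm.Sat]; rw [ih v h]
  | and φ ψ ih1 ih2 =>
    intro v h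
    simp only [Fm.consts, Finset.mem_union, not_or] at h
    simp only [Fm.Sat]; rw [ih1 v h.1, ih2 v h.2]
  | or φ ψ ih1 ih2 =>
    intro v h
    simp only [Fm.consts, Finset.mem_union, not_or] at h
    simp only [Fm.Sat]; rw [ih1 v h.1, ih2 v h.2]
  | ex y φ ih =>
    intro v h
    simp only [Fm.Sat]
    exact exists_congr fun e => ih _ h
  | all y φ ih =>
    intro v h
    simp only [Fm.Sat]
    exact forall_congr' fun e => ih _ h

lemma Tm.eval_substC {D : Type*} (cI : ℕ → D) (v : ℕ → D) (x c : ℕ) (t : Tm) :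
    Tm.eval cI v (t.substC x c) = Tm.eval cI (Function.update v x (cI c)) t := by
  cases t with
  | var y =>
    by_cases h : y = x
    · subst h; simp [Tm.substC, Tm.eval]
    · simp [Tm.substC, h, Tm.eval, Function.update_of_ne h]
  | const e => rfl

lemma Fm.sat_substC {D : Type*} (I : ℕ → List D → Prop) (cI : ℕ → D)
    (x c : ℕ) : ∀ (φ : Fm) (v : ℕ → D),
    Fm.Sat I cI v (φ.substC x c) ↔ Fm.Sat I cI (Function.update v x (cI c)) φ := by
  intro φ
  induction φ with
  | atom q ts =>
    intro v
    simp only [Fm.substC, Fm.Sat, List.map_map]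
    have : (Tm.eval cI v ∘ Tm.substC x c) = Tm.eval cI (Function.update v x (cI c)) :=
      funext fun t => Tm.eval_substC cI v x c t
    rw [this]
  | neg φ ih => intro v; simp only [Fm.substC, Fm.Sat]; rw [ih v]
  | and φ ψ ih1 ih2 => intro v; simp only [Fm.substC, Fm.Sat]; rw [ih1 v, ih2 v]
  | or φ ψ ih1 ih2 => intro v; simp only [Fm.substC, Fm.Sat]; rw [ih1 v, ih2 v]
  | ex y φ ih =>
    intro v
    by_cases h : y = x
    · subst h
      simp only [Fm.substC, if_true, eq_self_iff_true, Fm.Sat]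
      exact exists_congr fun d => by rw [Function.update_idem]
    · simp only [Fm.substC, if_neg h, Fm.Sat]
      exact exists_congr fun d => by
        rw [ih (Function.update v y d), Function.update_comm h]
  | all y φ ih =>
    intro v
    by_cases h : y = x
    · subst h
      simp only [Fm.substC, if_true, eq_self_iff_true, Fm.Sat]
      exact forall_congr' fun d => by rw [Function.update_idem]
    · simp only [Fm.substC, if_neg h, Fm.Sat]
      exact forall_congr' fun d => by
        rw [ih (Function.update v y d), Function.update_comm h]

/-- Soundness of existential instantiation with a fresh witness: for
`φ = ∃x·p(x)`, a constant `c` occurring in no formula of `R` nor in `p`, and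
a Boolean definition variable `l` (a 0-ary atom) with its definition clauses,
`R ∪ {l → φ, ¬l → ¬φ}` is satisfiable iff
`R ∪ {l → φ, ¬l → ¬φ, l → p(c), ¬l → ¬p(c)}` is satisfiable. -/
theorem existentialInst_fresh_equisat (R : Set Fm) (p : Fm) (x c lp : ℕ)
    (hfreshR : ∀ φ ∈ R, c ∉ φ.consts)
    (hfreshp : c ∉ p.consts) :
    SatSet (R ∪ {Fm.imp (.atom lp []) (.ex x p),
                 Fm.imp (.neg (.atom lp [])) (.neg (.ex x p))}) ↔
    SatSet (R ∪ {Fm.imp (.atom lp []) (.ex x p),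
                 Fm.imp (.neg (.atom lp [])) (.neg (.ex x p)),
                 Fm.imp (.atom lp []) (p.substC x c),
                 Fm.imp (.neg (.atom lp [])) (.neg (p.substC x c))}) := by
  constructor
  · rintro ⟨D, hD, I, cI, v, hs⟩
    have hclause1 : Fm.Sat I cI v (Fm.imp (.atom lp []) (.ex x p)) := by
      apply hs; right; simp
    have hclause2 : Fm.Sat I cI v (Fm.imp (.neg (.atom lp [])) (.neg (.ex x p))) := by
      apply hs; right; simp
    by_cases hA : I lp []
    · -- l is true: pick a witness and interpret c as it
      have hex : ∃ d : D, Fm.Sat I cI (Function.update v x d) p := by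
        rcases hclause1 with h | h
        · exact absurd hA (by simpa [Fm.Sat] using h)
        · exact h
      obtain ⟨d, hd⟩ := hex
      refine ⟨D, hD, I, Function.update cI c d, v, ?_⟩
      intro φ hφ
      simp only [Set.mem_union, Set.mem_insert_iff, Set.mem_singleton_iff] at hφ
      rcases hφ with hR | rfl | rfl | rfl | rfl
      · exact (Fm.sat_update_fresh I cI c d φ v (hfreshR φ hR)).2 (hs φ (Or.inl hR))
      · right
        exact ⟨d, (Fm.sat_update_fresh I cI c d p _ hfreshp).2 hd⟩
      · left; simp [Fm.Sat, hA]
      · right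
        rw [Fm.sat_substC, Function.update_self,
          Fm.sat_update_fresh I cI c d p _ hfreshp]
        exact hd
      · left; simp [Fm.Sat, hA]
    · -- l is false: keep the model
      have hnex : ¬ ∃ d : D, Fm.Sat I cI (Function.update v x d) p := by
        rcases hclause2 with h | h
        · exact absurd (by simpa [Fm.Sat] using h) hA
        · exact h
      refine ⟨D, hD, I, cI, v, ?_⟩
      intro φ hφ
      simp only [Set.mem_union, Set.mem_insert_iff, Set.mem_singleton_iff] at hφ
      rcases hφ with hR | rfl | rfl | rfl | rfl
      · exact hs φ (Or.inl hR)
      · exact hclause1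
      · exact hclause2
      · left; simp [Fm.Sat, hA]
      · right
        intro hsub
        exact hnex ⟨cI c, (Fm.sat_substC I cI x c p v).1 hsub⟩
  · rintro ⟨D, hD, I, cI, v, hs⟩
    refine ⟨D, hD, I, cI, v, ?_⟩
    intro φ hφ
    apply hs
    simp only [Set.mem_union, Set.mem_insert_iff, Set.mem_singleton_iff] at hφ ⊢
    tauto
end

section
/- Soundness of the Substitute rule (propositional version): if ψ is a subformula occurrence of φ and l_ψ is a variable with definition clauses l_ψ → ψ and ¬l_ψ → ¬ψ, then {l_φ → φ, ¬l_ψ → ¬ψ} entails l_φ → φ[ψ ← l_ψ], and {¬l_φ → ¬φ, l_ψ → ψ} entails ¬l_φ → ¬φ[ψ ← l_ψ], where φ[ψ ← l_ψ] denotes replacing the occurrence of ψ in φ by l_ψ and ψ occurs positively in φ. -/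
inductive PForm where
  | var : ℕ → PForm
  | tru : PForm
  | fls : PForm
  | neg : PForm → PForm
  | and : PForm → PForm → PForm
  | or  : PForm → PForm → PForm

def PForm.eval (v : ℕ → Bool) : PForm → Bool
  | var n => v n
  | tru => true
  | fls => false
  | neg φ => !(φ.eval v)
  | and φ ψ => φ.eval v && ψ.eval v
  | or φ ψ => φ.eval v || ψ.eval v

/-- A one-hole formula context, marking an occurrence of a subformula. -/
inductive Ctx where
  | hole : Ctx
  | neg  : Ctx → Ctx
  | andL : Ctx → PForm → Ctx
  | andR : PForm → Ctx → Ctx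
  | orL  : Ctx → PForm → Ctx
  | orR  : PForm → Ctx → Ctx

/-- Filling the hole of a context with a formula. -/
def Ctx.fill : Ctx → PForm → PForm
  | hole, ψ => ψ
  | neg C, ψ => .neg (C.fill ψ)
  | andL C χ, ψ => .and (C.fill ψ) χ
  | andR χ C, ψ => .and χ (C.fill ψ)
  | orL C χ, ψ => .or (C.fill ψ) χ
  | orR χ C, ψ => .or χ (C.fill ψ)

/-- The occurrence is positive iff the hole is under an even number of negations. -/
def Ctx.positive : Ctx → Bool
  | hole => true
  | neg C => !C.positive
  | andL C _ => C.positive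
  | andR _ C => C.positive
  | orL C _ => C.positive
  | orR _ C => C.positive

lemma ctx_mono (C : Ctx) (v : ℕ → Bool) (a b : PForm)
    (h1 : C.positive = true → (a.eval v = true → b.eval v = true))
    (h2 : C.positive = false → (b.eval v = true → a.eval v = true)) :
    (C.fill a).eval v = true → (C.fill b).eval v = true := by
  induction C generalizing a b with
  | hole => exact h1 rfl
  | neg C ih =>
    simp only [Ctx.fill, PForm.eval, Bool.not_eq_true', Bool.not_eq_true]
    intro h
    by_contra hb
    simp only [Bool.not_eq_false] at hb
    have := ih b a
      (fun hp => h2 (by simp [Ctx.positive, hp]))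
      (fun hp => h1 (by simpa [Ctx.positive] using hp)) hb
    simp [this] at h
  | andL C χ ih =>
    simp only [Ctx.fill, PForm.eval, Bool.and_eq_true]
    rintro ⟨h, hc⟩
    exact ⟨ih a b h1 h2 h, hc⟩
  | andR χ C ih =>
    simp only [Ctx.fill, PForm.eval, Bool.and_eq_true]
    rintro ⟨hc, h⟩
    exact ⟨hc, ih a b h1 h2 h⟩
  | orL C χ ih =>
    simp only [Ctx.fill, PForm.eval, Bool.or_eq_true]
    rintro (h | hc)
    · exact Or.inl (ih a b h1 h2 h)
    · exact Or.inr hc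
  | orR χ C ih =>
    simp only [Ctx.fill, PForm.eval, Bool.or_eq_true]
    rintro (hc | h)
    · exact Or.inl hc
    · exact Or.inr (ih a b h1 h2 h)

/-- Soundness of the Substitute rule (propositional version): if `ψ` occurs
positively in `φ = C[ψ]` and `l_ψ` has definition clauses for `ψ`, then
`{l_φ → φ, ¬l_ψ → ¬ψ} ⊨ l_φ → C[l_ψ]` and
`{¬l_φ → ¬φ, l_ψ → ψ} ⊨ ¬l_φ → ¬C[l_ψ]`. -/
theorem substitute_sound (C : Ctx) (ψ : PForm) (lphi lpsi : ℕ)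
    (hpos : C.positive = true) :
    (∀ v : ℕ → Bool,
        (v lphi = true → (C.fill ψ).eval v = true) →
        (v lpsi = false → ψ.eval v = false) →
        (v lphi = true → (C.fill (.var lpsi)).eval v = true)) ∧
    (∀ v : ℕ → Bool,
        (v lphi = false → (C.fill ψ).eval v = false) →
        (v lpsi = true → ψ.eval v = true) →
        (v lphi = false → (C.fill (.var lpsi)).eval v = false)) := by
  constructor
  · intro v hφ hψ hl
    refine ctx_mono C v ψ (.var lpsi) (fun _ h => ?_) (by simp [hpos]) (hφ hl)
    by_contra hb
    simp only [PForm.eval, Bool.not_eq_true] at hb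
    simp [hψ hb] at h
  · intro v hφ hψ hl
    by_contra hb
    simp only [Bool.not_eq_false] at hb
    have := ctx_mono C v (.var lpsi) ψ
      (fun _ h => hψ h) (by simp [hpos]) hb
    simp [hφ hl] at this
end

section
/- Correctness of backward proof checking: let a proof d₁,…,dₙ be given where each step derives resources from dependencies, and let core be any subset of steps containing dₙ such that for every step in core, each of its dependency resources is either an input formula or is derived by an earlier step that is also in core. If every step in core satisfies its rule's enabling condition and dₙ derives ⊥, then replaying only the steps of core (in order) from the initial state yields a non-error state containing ⊥. -/
open scoped Classical in
/-- Replay a list of derivation steps `(dep, out, ok)` from the given set of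
input resources: a step is applied only if its enabling condition `ok` holds
and its dependencies are contained in the current resource set; otherwise the
error state `none` results. -/
noncomputable def replay {Res : Type*} (inputs : Set Res)
    (l : List (Set Res × Set Res × Prop)) : Option (Set Res) :=
  l.foldl
    (fun s step =>
      match s with
      | none => none
      | some st => if step.2.2 ∧ step.1 ⊆ st then some (st ∪ step.2.1) else none)
    (some inputs)

open scoped Classical in
lemma replay_aux {Res : Type*} (inputs : Set Res)
    (steps : List (Set Res × Set Res × Prop)) (core : Finset ℕ)
    (hok : ∀ i ∈ core, ∀ hi : i < steps.length, (steps.get ⟨i, hi⟩).2.2)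
    (hdep : ∀ i ∈ core, ∀ hi : i < steps.length,
        ∀ r ∈ (steps.get ⟨i, hi⟩).1,
          r ∈ inputs ∨
            ∃ j ∈ core, j < i ∧ ∃ hj : j < steps.length,
              r ∈ (steps.get ⟨j, hj⟩).2.1) :
    ∀ (l : List (Set Res × Set Res × Prop)) (k : ℕ), steps.drop k = l →
      ∀ st : Set Res, inputs ⊆ st →
      (∀ j ∈ core, ∀ hj : j < steps.length, j < k → (steps.get ⟨j, hj⟩).2.1 ⊆ st) →
      ∃ S, List.foldl
        (fun s step =>
          match s with
          | none => none
          | some st => if step.2.2 ∧ step.1 ⊆ st then some (st ∪ step.2.1) else none)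
        (some st)
        ((((List.range' k l.length).zip l).filter (fun p => p.1 ∈ core)).map Prod.snd) = some S ∧
        st ⊆ S ∧ ∀ j ∈ core, ∀ hj : j < steps.length, (steps.get ⟨j, hj⟩).2.1 ⊆ S := by
  intro l
  induction l with
  | nil =>
    intro k hk st hist hprev
    have hlek : steps.length ≤ k := by
      by_contra h
      push_neg at h
      have := List.drop_eq_nil_iff.mp hk
      omega
    refine ⟨st, by simp, le_rfl, fun j hj hjl => hprev j hj hjl (by omega)⟩
  | cons a l ih =>
    intro k hk st hist hprev
    have hklt : k < steps.length := by
      by_contra h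
      push_neg at h
      simp [List.drop_eq_nil_of_le h] at hk
    have hga : steps.get ⟨k, hklt⟩ = a ∧ steps.drop (k + 1) = l := by
      have := List.drop_eq_getElem_cons hklt (l := steps)
      rw [hk] at this
      injection this with h1 h2
      exact ⟨h1.symm, h2.symm⟩
    obtain ⟨hget, hdrop⟩ := hga
    rw [List.length_cons, List.range'_succ, List.zip_cons_cons]
    by_cases hkc : k ∈ core
    · have hsub : a.1 ⊆ st := by
        intro r hr
        rcases hdep k hkc hklt r (by rwa [hget]) with h | ⟨j, hj, hjk, hjl, hout⟩
        · exact hist h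
        · exact hprev j hj hjl (by omega) hout
      have hcond : a.2.2 := by have := hok k hkc hklt; rwa [hget] at this
      have hprev' : ∀ j ∈ core, ∀ hj : j < steps.length, j < k + 1 →
          (steps.get ⟨j, hj⟩).2.1 ⊆ st ∪ a.2.1 := by
        intro j hj hjl hjk1
        rcases Nat.lt_succ_iff_lt_or_eq.mp hjk1 with h | h
        · exact (hprev j hj hjl h).trans Set.subset_union_left
        · subst h
          rw [hget]
          exact Set.subset_union_right
      obtain ⟨S, hS, hsub', hout'⟩ := ih (k + 1) hdrop (st ∪ a.2.1)
        (hist.trans Set.subset_union_left) hprev'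
      refine ⟨S, ?_, Set.subset_union_left.trans hsub', hout'⟩
      rw [List.filter_cons_of_pos (by simpa using hkc), List.map_cons, List.foldl_cons]
      show List.foldl
        (fun s step =>
          match s with
          | none => none
          | some st => if step.2.2 ∧ step.1 ⊆ st then some (st ∪ step.2.1) else none)
        (if a.2.2 ∧ a.1 ⊆ st then some (st ∪ a.2.1) else none)
        ((List.filter (fun p => decide (p.1 ∈ core)) ((List.range' (k + 1) l.length).zip l)).map Prod.snd)
        = some S
      rw [if_pos ⟨hcond, hsub⟩]
      exact hS
    · have hprev' : ∀ j ∈ core, ∀ hj : j < steps.length, j < k + 1 →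
          (steps.get ⟨j, hj⟩).2.1 ⊆ st := by
        intro j hj hjl hjk1
        rcases Nat.lt_succ_iff_lt_or_eq.mp hjk1 with h | h
        · exact hprev j hj hjl h
        · exact absurd (h ▸ hj) hkc
      obtain ⟨S, hS, hsub', hout'⟩ := ih (k + 1) hdrop st hist hprev'
      refine ⟨S, ?_, hsub', hout'⟩
      simp only [List.filter_cons, hkc, decide_false]
      exact hS

/-- Correctness of backward proof checking: if `core` is a set of step indices
containing the last step such that every dependency resource of a core step is
an input or is derived by an earlier core step, every core step satisfies its
enabling condition, and the last step derives `⊥`, then replaying only the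
core steps (in order) from the inputs yields a non-error state containing `⊥`. -/
theorem backward_check_correct {Res : Type*} (bot : Res) (inputs : Set Res)
    (steps : List (Set Res × Set Res × Prop))
    (core : Finset ℕ)
    (hne : steps ≠ [])
    (hrange : ∀ i ∈ core, i < steps.length)
    (hlastmem : steps.length - 1 ∈ core)
    (hok : ∀ i ∈ core, ∀ hi : i < steps.length, (steps.get ⟨i, hi⟩).2.2)
    (hdep : ∀ i ∈ core, ∀ hi : i < steps.length,
        ∀ r ∈ (steps.get ⟨i, hi⟩).1,
          r ∈ inputs ∨
            ∃ j ∈ core, j < i ∧ ∃ hj : j < steps.length,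
              r ∈ (steps.get ⟨j, hj⟩).2.1)
    (hbot : bot ∈ (steps.getLast hne).2.1) :
    ∃ S : Set Res,
      replay inputs ((((List.range steps.length).zip steps).filter (fun p => p.1 ∈ core)).map Prod.snd)
        = some S ∧ bot ∈ S := by
  obtain ⟨S, hS, -, hout⟩ := replay_aux inputs steps core hok hdep steps 0 rfl inputs
    le_rfl (by omega)
  have hlen : steps.length - 1 < steps.length := by
    have := List.length_pos_iff.mpr hne; omega
  refine ⟨S, ?_, ?_⟩
  · rw [replay, List.range_eq_range']
    exact hS
  · apply hout (steps.length - 1) hlastmem hlen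
    have h2 := hbot
    rw [List.getLast_eq_getElem] at h2
    simpa using h2
end

section
/- The grounding over-approximation is sound for unsatisfiability: if the grounded quantifier-free formula G(φ, D') produced by instantiating each existential quantifier with one fresh object and each universal quantifier over all objects of D' is unsatisfiable, then φ has no satisfying solution in any finite domain. -/
/-- Relational objects: a pair (class, identifier); the class of an object is
its first component. -/
abbrev Obj := ℕ × ℕ

/-- Terms of FOL*. -/
inductive STm where
  | const : ℤ → STm
  | attr : ℕ ⊕ Obj → ℕ → STm
  | add : STm → STm → STm
  | negt : STm → STm

/-- FOL* formulas in the quantified fragment. -/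
inductive SF where
  | tru : SF
  | fls : SF
  | eq : STm → STm → SF
  | lt : STm → STm → SF
  | ext : ℕ ⊕ Obj → SF
  | neg : SF → SF
  | and : SF → SF → SF
  | or : SF → SF → SF
  | ex : ℕ → ℕ → SF → SF   -- `ex x r ψ` : ∃ x : r · ψ
  | all : ℕ → ℕ → SF → SF  -- `all x r ψ` : ∀ x : r · ψ

def STm.eval (vAttr : Obj → ℕ → ℤ) (env : ℕ → Obj) : STm → ℤ
  | const z => z
  | attr (.inl x) i => vAttr (env x) i
  | attr (.inr o) i => vAttr o i
  | add t t' => t.eval vAttr env + t'.eval vAttr env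
  | negt t => - t.eval vAttr env

/-- FOL* satisfaction in a finite domain `D`. -/
def SF.Sat (D : Finset Obj) (vAttr : Obj → ℕ → ℤ) (vExt : Obj → Bool) :
    (ℕ → Obj) → SF → Prop
  | _, tru => True
  | _, fls => False
  | env, eq t t' => t.eval vAttr env = t'.eval vAttr env
  | env, lt t t' => t.eval vAttr env < t'.eval vAttr env
  | env, ext (.inl x) => vExt (env x) = true
  | _, ext (.inr o) => vExt o = true
  | env, neg φ => ¬ SF.Sat D vAttr vExt env φ
  | env, and φ ψ => SF.Sat D vAttr vExt env φ ∧ SF.Sat D vAttr vExt env ψ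
  | env, or φ ψ => SF.Sat D vAttr vExt env φ ∨ SF.Sat D vAttr vExt env ψ
  | env, ex x r ψ => ∃ o ∈ D, o.1 = r ∧ vExt o = true ∧
      SF.Sat D vAttr vExt (Function.update env x o) ψ
  | env, all x r ψ => ∀ o ∈ D, o.1 = r → (vExt o = true →
      SF.Sat D vAttr vExt (Function.update env x o) ψ)

/-- Grounding of a term: resolve object variables via `env`. -/
def STm.ground (env : ℕ → Obj) : STm → STm
  | const z => const z
  | attr (.inl x) i => attr (.inr (env x)) i
  | attr (.inr o) i => attr (.inr o) i
  | add t t' => add (t.ground env) (t'.ground env)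
  | negt t => negt (t.ground env)

/-- The over-approximating grounding `G(φ, D')`: each existential quantifier
`∃ x : r · ψ` is instantiated with one fresh object `(r, n)` (where `n` is a
fresh-name counter, threaded through the computation), producing
`o'.ext ∧ G(ψ[x←o'])`, and each universal quantifier is instantiated over all
objects of the matching class in `D'`, producing the conjunction of
`o'.ext → G(ψ[x←o'])`; `G` distributes over ∧ and ∨, and atoms are grounded
via the environment. -/
noncomputable def G (D' : Finset Obj) : SF → (ℕ → Obj) → ℕ → SF × ℕ
  | .tru, _, n => (.tru, n)
  | .fls, _, n => (.fls, n)
  | .eq t t', env, n => (.eq (t.ground env) (t'.ground env), n)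
  | .lt t t', env, n => (.lt (t.ground env) (t'.ground env), n)
  | .ext (.inl x), env, n => (.ext (.inr (env x)), n)
  | .ext (.inr o), _, n => (.ext (.inr o), n)
  | .neg φ, env, n =>
      let p := G D' φ env n
      (.neg p.1, p.2)
  | .and φ ψ, env, n =>
      let p := G D' φ env n
      let q := G D' ψ env p.2
      (.and p.1 q.1, q.2)
  | .or φ ψ, env, n =>
      let p := G D' φ env n
      let q := G D' ψ env p.2
      (.or p.1 q.1, q.2)
  | .ex x r ψ, env, n =>
      let p := G D' ψ (Function.update env x (r, n)) (n + 1)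
      (.and (.ext (.inr (r, n))) p.1, p.2)
  | .all x r ψ, env, n =>
      (D'.filter (fun o => o.1 = r)).toList.foldl
        (fun acc o =>
          let p := G D' ψ (Function.update env x o) acc.2
          (.and acc.1 (.or (.neg (.ext (.inr o))) p.1), p.2))
        (.tru, n)
  termination_by φ _ _ => sizeOf φ
  decreasing_by all_goals first | (simp; omega) | simp

/-- Negation normal form: negations occur only directly in front of atoms. -/
inductive IsNNF : SF → Prop
  | tru : IsNNF .tru
  | fls : IsNNF .fls
  | eq (t t' : STm) : IsNNF (.eq t t')
  | lt (t t' : STm) : IsNNF (.lt t t')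
  | ext (r : ℕ ⊕ Obj) : IsNNF (.ext r)
  | neq (t t' : STm) : IsNNF (.neg (.eq t t'))
  | nlt (t t' : STm) : IsNNF (.neg (.lt t t'))
  | next (r : ℕ ⊕ Obj) : IsNNF (.neg (.ext r))
  | and {a b : SF} : IsNNF a → IsNNF b → IsNNF (.and a b)
  | or {a b : SF} : IsNNF a → IsNNF b → IsNNF (.or a b)
  | ex (x r : ℕ) {p : SF} : IsNNF p → IsNNF (.ex x r p)
  | all (x r : ℕ) {p : SF} : IsNNF p → IsNNF (.all x r p)

/-- A term is pure if it references objects only through variables. -/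
def STm.Pure : STm → Prop
  | .const _ => True
  | .attr (.inl _) _ => True
  | .attr (.inr _) _ => False
  | .add t t' => t.Pure ∧ t'.Pure
  | .negt t => t.Pure

/-- A formula is pure if it references objects only through variables. -/
def SF.Pure : SF → Prop
  | .tru => True
  | .fls => True
  | .eq t t' => t.Pure ∧ t'.Pure
  | .lt t t' => t.Pure ∧ t'.Pure
  | .ext (.inl _) => True
  | .ext (.inr _) => False
  | .neg φ => φ.Pure
  | .and φ ψ => φ.Pure ∧ ψ.Pure
  | .or φ ψ => φ.Pure ∧ ψ.Pure
  | .ex _ _ φ => φ.Pure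
  | .all _ _ φ => φ.Pure

def STm.vars : STm → Finset ℕ
  | .const _ => ∅
  | .attr (.inl x) _ => {x}
  | .attr (.inr _) _ => ∅
  | .add t t' => t.vars ∪ t'.vars
  | .negt t => t.vars

/-- Free object variables of a formula. -/
def SF.freeVars : SF → Finset ℕ
  | .tru => ∅
  | .fls => ∅
  | .eq t t' => t.vars ∪ t'.vars
  | .lt t t' => t.vars ∪ t'.vars
  | .ext (.inl x) => {x}
  | .ext (.inr _) => ∅
  | .neg φ => φ.freeVars
  | .and φ ψ => φ.freeVars ∪ ψ.freeVars
  | .or φ ψ => φ.freeVars ∪ ψ.freeVars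
  | .ex x _ φ => φ.freeVars.erase x
  | .all x _ φ => φ.freeVars.erase x

section Sound

variable (DD : Finset Obj) (vA : Obj → ℕ → ℤ) (vE : Obj → Bool) (D' : Finset Obj)

open Classical in
/-- The "active path" of the grounding run, relative to an oracle `α` giving
representatives for universal instantiations: returns the association list of
(fresh name, chosen witness) pairs along the satisfied path. -/
noncomputable def runG (α : Obj → Option Obj) :
    SF → (ℕ → Obj) → ℕ → (ℕ → Obj) → List (Obj × Obj)
  | .tru, _, _, _ => []
  | .fls, _, _, _ => []
  | .eq _ _, _, _, _ => []
  | .lt _ _, _, _, _ => []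
  | .ext _, _, _, _ => []
  | .neg _, _, _, _ => []
  | .and φ ψ, g, n, v => runG α φ g n v ++ runG α ψ g (G D' φ g n).2 v
  | .or φ ψ, g, n, v =>
      if SF.Sat DD vA vE v φ then runG α φ g n v
      else runG α ψ g (G D' φ g n).2 v
  | .ex x r ψ, g, n, v =>
      if h : ∃ o, o ∈ DD ∧ o.1 = r ∧ vE o = true ∧
          SF.Sat DD vA vE (Function.update v x o) ψ
      then ((r, n), h.choose) ::
        runG α ψ (Function.update g x (r, n)) (n + 1)
          (Function.update v x h.choose)
      else []
  | .all x r ψ, g, n, v =>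
      ((D'.filter (fun o => o.1 = r)).toList.foldl
        (fun acc o =>
          ((match α o with
            | some d => acc.1 ++ runG α ψ (Function.update g x o) acc.2
                (Function.update v x d)
            | none => acc.1),
           (G D' ψ (Function.update g x o) acc.2).2))
        ([], n)).1
  termination_by φ _ _ _ => sizeOf φ
  decreasing_by all_goals first | (simp; omega) | simp

-- counter snd of G-foldl step, independent of formula accumulator
lemma gfold_snd (ψ : SF) (x : ℕ) (g : ℕ → Obj) :
    ∀ (L : List Obj) (F0 F0' : SF) (n : ℕ),
    (L.foldl (fun acc o =>
        (SF.and acc.1 (.or (.neg (.ext (.inr o))) (G D' ψ (Function.update g x o) acc.2).1),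
         (G D' ψ (Function.update g x o) acc.2).2)) (F0, n)).2
    = (L.foldl (fun acc o =>
        (SF.and acc.1 (.or (.neg (.ext (.inr o))) (G D' ψ (Function.update g x o) acc.2).1),
         (G D' ψ (Function.update g x o) acc.2).2)) (F0', n)).2 := by
  intro L
  induction L with
  | nil => intro _ _ _; rfl
  | cons o t ih => intro F0 F0' n; simp only [List.foldl_cons]; exact ih _ _ _

lemma G_le (ψ : SF) : ∀ (g : ℕ → Obj) (n : ℕ), n ≤ (G D' ψ g n).2 := by
  induction ψ with
  | tru => intro g n; simp [G]
  | fls => intro g n; simp [G]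
  | eq t t' => intro g n; simp [G]
  | lt t t' => intro g n; simp [G]
  | ext a => intro g n; cases a <;> simp [G]
  | neg ψ ih => intro g n; simp only [G]; exact ih g n
  | and φ ψ ih1 ih2 => intro g n; simp only [G]; exact le_trans (ih1 g n) (ih2 g _)
  | or φ ψ ih1 ih2 => intro g n; simp only [G]; exact le_trans (ih1 g n) (ih2 g _)
  | ex x r ψ ih => intro g n; simp only [G]; exact le_trans (Nat.le_succ n) (ih _ _)
  | all x r ψ ih =>
      intro g n; simp only [G]
      generalize (D'.filter (fun o => o.1 = r)).toList = L
      induction L generalizing n with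
      | nil => simp
      | cons o t iht =>
          simp only [List.foldl_cons]
          rw [gfold_snd D' ψ x g t _ SF.tru]
          exact le_trans (ih _ n) (iht _)
/-- The step function of `G`'s universal fold. -/
noncomputable def gstep (ψ : SF) (x : ℕ) (g : ℕ → Obj) : SF × ℕ → Obj → SF × ℕ :=
  fun acc o =>
    (SF.and acc.1 (.or (.neg (.ext (.inr o))) (G D' ψ (Function.update g x o) acc.2).1),
     (G D' ψ (Function.update g x o) acc.2).2)

/-- The step function of `runG`'s universal fold. -/
noncomputable def rstep (α : Obj → Option Obj) (ψ : SF) (x : ℕ)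
    (g v : ℕ → Obj) : List (Obj × Obj) × ℕ → Obj → List (Obj × Obj) × ℕ :=
  fun acc o =>
    ((match α o with
      | some d => acc.1 ++ runG DD vA vE D' α ψ (Function.update g x o) acc.2
          (Function.update v x d)
      | none => acc.1),
     (G D' ψ (Function.update g x o) acc.2).2)

lemma G_all (x r : ℕ) (ψ : SF) (g : ℕ → Obj) (n : ℕ) :
    G D' (.all x r ψ) g n
      = (D'.filter (fun o => o.1 = r)).toList.foldl (gstep D' ψ x g) (.tru, n) := by
  simp only [G]; rfl

lemma runG_all (α : Obj → Option Obj) (x r : ℕ) (ψ : SF) (g v : ℕ → Obj) (n : ℕ) :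
    runG DD vA vE D' α (.all x r ψ) g n v
      = ((D'.filter (fun o => o.1 = r)).toList.foldl
          (rstep DD vA vE D' α ψ x g v) ([], n)).1 := by
  simp only [runG]; rfl

/-- counter fold -/
noncomputable def cnt (ψ : SF) (x : ℕ) (g : ℕ → Obj) (L : List Obj) (n : ℕ) : ℕ :=
  L.foldl (fun m o => (G D' ψ (Function.update g x o) m).2) n

lemma gfold_snd_eq (ψ : SF) (x : ℕ) (g : ℕ → Obj) :
    ∀ (L : List Obj) (F0 : SF) (n : ℕ),
    (L.foldl (gstep D' ψ x g) (F0, n)).2 = cnt D' ψ x g L n := by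
  intro L
  induction L with
  | nil => intro _ _; rfl
  | cons o t ih => intro F0 n; simp only [List.foldl_cons, cnt, gstep]; exact ih _ _

lemma rfold_snd_eq (α : Obj → Option Obj) (ψ : SF) (x : ℕ) (g v : ℕ → Obj) :
    ∀ (L : List Obj) (a : List (Obj × Obj)) (n : ℕ),
    (L.foldl (rstep DD vA vE D' α ψ x g v) (a, n)).2 = cnt D' ψ x g L n := by
  intro L
  induction L with
  | nil => intro _ _; rfl
  | cons o t ih => intro a n; simp only [List.foldl_cons, cnt, rstep]; exact ih _ _

lemma rfold_fst (α : Obj → Option Obj) (ψ : SF) (x : ℕ) (g v : ℕ → Obj) :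
    ∀ (L : List Obj) (a : List (Obj × Obj)) (n : ℕ),
    (L.foldl (rstep DD vA vE D' α ψ x g v) (a, n)).1
      = a ++ (L.foldl (rstep DD vA vE D' α ψ x g v) ([], n)).1 := by
  intro L
  induction L with
  | nil => intro _ _; simp
  | cons o t ih =>
      intro a n
      simp only [List.foldl_cons, rstep]
      cases α o with
      | none => simpa using ih _ _
      | some d =>
          simp only
          rw [ih _ _, ih ([] ++ runG DD vA vE D' α ψ (Function.update g x o) n (Function.update v x d)) _]
          simp

lemma cnt_le (ψ : SF) (x : ℕ) (g : ℕ → Obj) :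
    ∀ (L : List Obj) (n : ℕ), n ≤ cnt D' ψ x g L n := by
  intro L
  induction L with
  | nil => intro n; exact le_refl n
  | cons o t ih =>
      intro n
      exact le_trans (G_le D' ψ _ n) (ih _)
lemma runG_bounds (α : Obj → Option Obj) (ψ : SF) :
    ∀ (g : ℕ → Obj) (n : ℕ) (v : ℕ → Obj),
      (∀ p ∈ runG DD vA vE D' α ψ g n v, n ≤ p.1.2 ∧ p.1.2 < (G D' ψ g n).2)
      ∧ (runG DD vA vE D' α ψ g n v).Pairwise (fun a b => a.1.2 < b.1.2) := by
  induction ψ with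
  | tru => intro g n v; simp [runG]
  | fls => intro g n v; simp [runG]
  | eq t t' => intro g n v; simp [runG]
  | lt t t' => intro g n v; simp [runG]
  | ext a => intro g n v; simp [runG]
  | neg ψ ih => intro g n v; simp [runG]
  | and φ ψ ih1 ih2 =>
      intro g n v
      simp only [runG, G]
      constructor
      · intro p hp
        rcases List.mem_append.1 hp with h | h
        · obtain ⟨h1, h2⟩ := (ih1 g n v).1 p h
          exact ⟨h1, lt_of_lt_of_le h2 (G_le D' ψ g _)⟩
        · obtain ⟨h1, h2⟩ := (ih2 g _ v).1 p h
          exact ⟨le_trans (G_le D' φ g n) h1, h2⟩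
      · refine List.pairwise_append.2 ⟨(ih1 g n v).2, (ih2 g _ v).2, ?_⟩
        intro a ha b hb
        exact lt_of_lt_of_le ((ih1 g n v).1 a ha).2 ((ih2 g _ v).1 b hb).1
  | or φ ψ ih1 ih2 =>
      intro g n v
      simp only [runG, G]
      split
      · refine ⟨fun p hp => ?_, (ih1 g n v).2⟩
        obtain ⟨h1, h2⟩ := (ih1 g n v).1 p hp
        exact ⟨h1, lt_of_lt_of_le h2 (G_le D' ψ g _)⟩
      · refine ⟨fun p hp => ?_, (ih2 g _ v).2⟩
        obtain ⟨h1, h2⟩ := (ih2 g _ v).1 p hp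
        exact ⟨le_trans (G_le D' φ g n) h1, h2⟩
  | ex x r ψ ih =>
      intro g n v
      simp only [runG, G]
      split
      · rename_i h
        constructor
        · intro p hp
          rcases List.mem_cons.1 hp with h' | h'
          · subst h'
            exact ⟨le_refl n, lt_of_lt_of_le (Nat.lt_succ_self n) (G_le D' ψ _ _)⟩
          · obtain ⟨h1, h2⟩ := (ih _ _ _).1 p h'
            exact ⟨le_trans (Nat.le_succ n) h1, h2⟩
        · refine List.pairwise_cons.2 ⟨?_, (ih _ _ _).2⟩
          intro b hb
          exact lt_of_lt_of_le (Nat.lt_succ_self n) ((ih _ _ _).1 b hb).1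
      · simp
  | all x r ψ ih =>
      intro g n v
      rw [runG_all, G_all, gfold_snd_eq]
      generalize (D'.filter (fun o => o.1 = r)).toList = L
      induction L generalizing n with
      | nil => simp [cnt]
      | cons o t iht =>
          have hcnt : cnt D' ψ x g (o :: t) n
              = cnt D' ψ x g t (G D' ψ (Function.update g x o) n).2 := rfl
          simp only [List.foldl_cons]
          have hstep : rstep DD vA vE D' α ψ x g v ([], n) o
              = ((match α o with
                  | some d => runG DD vA vE D' α ψ (Function.update g x o) n
                      (Function.update v x d)
                  | none => ([] : List (Obj × Obj))),
                 (G D' ψ (Function.update g x o) n).2) := by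
            simp only [rstep]; cases α o <;> simp
          rw [hstep]
          set n1 := (G D' ψ (Function.update g x o) n).2 with hn1
          have hd : ∀ p ∈ (match α o with
                  | some d => runG DD vA vE D' α ψ (Function.update g x o) n
                      (Function.update v x d)
                  | none => ([] : List (Obj × Obj))),
              n ≤ p.1.2 ∧ p.1.2 < n1 ∧ True := by
            cases α o with
            | none => simp
            | some d =>
                intro p hp
                obtain ⟨h1, h2⟩ := (ih _ n _).1 p hp
                exact ⟨h1, h2, trivial⟩
          have hdp : (match α o with
                  | some d => runG DD vA vE D' α ψ (Function.update g x o) n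
                      (Function.update v x d)
                  | none => ([] : List (Obj × Obj))).Pairwise
                (fun a b : Obj × Obj => a.1.2 < b.1.2) := by
            cases α o with
            | none => simp
            | some d => exact (ih _ n _).2
          rw [rfold_fst]
          have hrest := iht n1
          constructor
          · intro p hp
            rcases List.mem_append.1 hp with h' | h'
            · obtain ⟨h1, h2, _⟩ := hd p h'
              refine ⟨h1, lt_of_lt_of_le h2 ?_⟩
              rw [hcnt]
              exact cnt_le D' ψ x g t n1
            · obtain ⟨h1, h2⟩ := hrest.1 p h'
              exact ⟨le_trans (G_le D' ψ _ _) h1, by rwa [hcnt]⟩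
          · refine List.pairwise_append.2 ⟨hdp, hrest.2, ?_⟩
            intro a ha b hb
            exact lt_of_lt_of_le (hd a ha).2.1 (hrest.1 b hb).1
lemma runG_inv (α : Obj → Option Obj) (ψ : SF) :
    ∀ (g : ℕ → Obj) (n : ℕ) (v : ℕ → Obj),
      ∀ p ∈ runG DD vA vE D' α ψ g n v,
        p.2 ∈ DD ∧ p.2.1 = p.1.1 ∧ vE p.2 = true := by
  induction ψ with
  | tru => intro g n v; simp [runG]
  | fls => intro g n v; simp [runG]
  | eq t t' => intro g n v; simp [runG]
  | lt t t' => intro g n v; simp [runG]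
  | ext a => intro g n v; simp [runG]
  | neg ψ ih => intro g n v; simp [runG]
  | and φ ψ ih1 ih2 =>
      intro g n v p hp
      simp only [runG] at hp
      rcases List.mem_append.1 hp with h | h
      · exact ih1 g n v p h
      · exact ih2 g _ v p h
  | or φ ψ ih1 ih2 =>
      intro g n v p hp
      simp only [runG] at hp
      split at hp
      · exact ih1 g n v p hp
      · exact ih2 g _ v p hp
  | ex x r ψ ih =>
      intro g n v p hp
      simp only [runG] at hp
      split at hp
      · rename_i h
        rcases List.mem_cons.1 hp with h' | h'
        · subst h'
          exact ⟨h.choose_spec.1, h.choose_spec.2.1, h.choose_spec.2.2.1⟩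
        · exact ih _ _ _ p h'
      · simp at hp
  | all x r ψ ih =>
      intro g n v p hp
      rw [runG_all] at hp
      revert hp
      generalize (D'.filter (fun o => o.1 = r)).toList = L
      induction L generalizing n with
      | nil => simp
      | cons o t iht =>
          intro hp
          simp only [List.foldl_cons] at hp
          have hstep : rstep DD vA vE D' α ψ x g v ([], n) o
              = ((match α o with
                  | some d => runG DD vA vE D' α ψ (Function.update g x o) n
                      (Function.update v x d)
                  | none => ([] : List (Obj × Obj))),
                 (G D' ψ (Function.update g x o) n).2) := by
            simp only [rstep]; cases α o <;> simp
          rw [hstep, rfold_fst] at hp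
          rcases List.mem_append.1 hp with h' | h'
          · revert h'
            cases α o with
            | none => simp
            | some d => exact fun h' => ih _ _ _ p h'
          · exact iht _ h'

lemma runG_mono (α β : Obj → Option Obj)
    (hab : ∀ o d, α o = some d → β o = some d) (ψ : SF) :
    ∀ (g : ℕ → Obj) (n : ℕ) (v : ℕ → Obj),
      ∀ p ∈ runG DD vA vE D' α ψ g n v, p ∈ runG DD vA vE D' β ψ g n v := by
  induction ψ with
  | tru => intro g n v; simp [runG]
  | fls => intro g n v; simp [runG]
  | eq t t' => intro g n v; simp [runG]
  | lt t t' => intro g n v; simp [runG]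
  | ext a => intro g n v; simp [runG]
  | neg ψ ih => intro g n v; simp [runG]
  | and φ ψ ih1 ih2 =>
      intro g n v p hp
      simp only [runG] at hp ⊢
      rcases List.mem_append.1 hp with h | h
      · exact List.mem_append.2 (Or.inl (ih1 g n v p h))
      · exact List.mem_append.2 (Or.inr (ih2 g _ v p h))
  | or φ ψ ih1 ih2 =>
      intro g n v p hp
      simp only [runG] at hp ⊢
      split at hp <;> rename_i hc
      · rw [if_pos hc]; exact ih1 g n v p hp
      · rw [if_neg hc]; exact ih2 g _ v p hp
  | ex x r ψ ih =>
      intro g n v p hp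
      simp only [runG] at hp ⊢
      split at hp <;> rename_i hc
      · rw [dif_pos hc]
        rcases List.mem_cons.1 hp with h' | h'
        · exact List.mem_cons.2 (Or.inl h')
        · exact List.mem_cons.2 (Or.inr (ih _ _ _ p h'))
      · simp at hp
  | all x r ψ ih =>
      intro g n v p hp
      rw [runG_all] at hp ⊢
      revert hp
      generalize (D'.filter (fun o => o.1 = r)).toList = L
      induction L generalizing n with
      | nil => simp
      | cons o t iht =>
          intro hp
          simp only [List.foldl_cons] at hp ⊢
          have hstepa : rstep DD vA vE D' α ψ x g v ([], n) o
              = ((match α o with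
                  | some d => runG DD vA vE D' α ψ (Function.update g x o) n
                      (Function.update v x d)
                  | none => ([] : List (Obj × Obj))),
                 (G D' ψ (Function.update g x o) n).2) := by
            simp only [rstep]; cases α o <;> simp
          have hstepb : rstep DD vA vE D' β ψ x g v ([], n) o
              = ((match β o with
                  | some d => runG DD vA vE D' β ψ (Function.update g x o) n
                      (Function.update v x d)
                  | none => ([] : List (Obj × Obj))),
                 (G D' ψ (Function.update g x o) n).2) := by
            simp only [rstep]; cases β o <;> simp
          rw [hstepa, rfold_fst] at hp
          rw [hstepb, rfold_fst]
          rcases List.mem_append.1 hp with h' | h'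
          · refine List.mem_append.2 (Or.inl ?_)
            revert h'
            cases hao : α o with
            | none => simp
            | some d =>
                rw [hab o d hao]
                exact fun h' => ih _ _ _ p h'
          · exact List.mem_append.2 (Or.inr (iht _ h'))
def look : List (Obj × Obj) → Obj → Option Obj
  | [], _ => none
  | p :: t, o => if p.1 = o then some p.2 else look t o

lemma look_some_mem {l : List (Obj × Obj)} {o d : Obj}
    (h : look l o = some d) : (o, d) ∈ l := by
  induction l with
  | nil => simp [look] at h
  | cons p t ih =>
      simp only [look] at h
      split at h
      · rename_i hpo
        cases h
        exact List.mem_cons.2 (Or.inl (by rw [← hpo]))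
      · exact List.mem_cons.2 (Or.inr (ih h))

lemma mem_look {l : List (Obj × Obj)} {o d : Obj}
    (hl : l.Pairwise (fun a b => a.1.2 < b.1.2)) (h : (o, d) ∈ l) :
    look l o = some d := by
  induction l with
  | nil => simp at h
  | cons p t ih =>
      simp only [look]
      rcases List.mem_cons.1 h with h' | h'
      · rw [if_pos (by rw [← h'])]
        rw [← h']
      · have hkey : p.1.2 < o.2 := by
          have := (List.pairwise_cons.1 hl).1 (o, d) h'
          exact this
        rw [if_neg ?_]
        · exact ih (List.pairwise_cons.1 hl).2 h'
        · intro he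
          rw [he] at hkey
          exact lt_irrefl _ hkey

lemma look_eq_of_mem_iff {l1 l2 : List (Obj × Obj)}
    (h1 : l1.Pairwise (fun a b => a.1.2 < b.1.2))
    (h2 : l2.Pairwise (fun a b => a.1.2 < b.1.2))
    (h : ∀ p : Obj × Obj, p ∈ l1 ↔ p ∈ l2) (o : Obj) :
    look l1 o = look l2 o := by
  cases hc : look l1 o with
  | some d => rw [mem_look h2 ((h _).1 (look_some_mem hc))]
  | none =>
      cases hc2 : look l2 o with
      | none => rfl
      | some d =>
          rw [mem_look h1 ((h _).2 (look_some_mem hc2))] at hc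
          exact absurd hc (by simp)

variable (φt : SF) (env0 venv : ℕ → Obj)

noncomputable def Fop (α : Obj → Option Obj) : Obj → Option Obj :=
  fun o => look (runG DD vA vE D' α φt env0 0 venv) o

noncomputable def iter (k : ℕ) : Obj → Option Obj :=
  (Fop DD vA vE D' φt env0 venv)^[k] (fun _ => none)

lemma run_pairwise (α : Obj → Option Obj) :
    (runG DD vA vE D' α φt env0 0 venv).Pairwise (fun a b => a.1.2 < b.1.2) :=
  (runG_bounds DD vA vE D' α φt env0 0 venv).2

lemma Fop_mono {α β : Obj → Option Obj}
    (hab : ∀ o d, α o = some d → β o = some d) :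
    ∀ o d, Fop DD vA vE D' φt env0 venv α o = some d →
      Fop DD vA vE D' φt env0 venv β o = some d := by
  intro o d h
  exact mem_look (run_pairwise DD vA vE D' φt env0 venv β)
    (runG_mono DD vA vE D' α β hab φt env0 0 venv _ (look_some_mem h))

lemma iter_chain : ∀ k o d, iter DD vA vE D' φt env0 venv k o = some d →
    iter DD vA vE D' φt env0 venv (k + 1) o = some d := by
  intro k
  induction k with
  | zero => intro o d h; simp [iter] at h
  | succ k ih =>
      intro o d
      rw [iter, iter, Function.iterate_succ_apply', Function.iterate_succ_apply']
      exact Fop_mono DD vA vE D' φt env0 venv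
        (by intro o' d' h'; exact ih o' d' h') o d

lemma exists_fixpoint :
    ∃ α : Obj → Option Obj,
      Fop DD vA vE D' φt env0 venv α = α ∧
      ∃ k, α = iter DD vA vE D' φt env0 venv (k + 1) := by
  classical
  set N := (G D' φt env0 0).2 with hN
  set Lk := fun k => runG DD vA vE D' (iter DD vA vE D' φt env0 venv k) φt env0 0 venv
    with hLk
  have hpair : ∀ k, (Lk k).Pairwise (fun a b : Obj × Obj => a.1.2 < b.1.2) :=
    fun k => run_pairwise DD vA vE D' φt env0 venv _
  have hnodup : ∀ k, (Lk k).Nodup := by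
    intro k
    exact (hpair k).imp (fun {a b} hlt => by
      intro he; rw [he] at hlt; exact lt_irrefl _ hlt)
  have hsub : ∀ k, ∀ p ∈ Lk k, p ∈ Lk (k + 1) := by
    intro k p hp
    exact runG_mono DD vA vE D' _ _ (iter_chain DD vA vE D' φt env0 venv k)
      φt env0 0 venv p hp
  have hbound : ∀ k, (Lk k).length ≤ N := by
    intro k
    have hmapp : ((Lk k).map (fun p => p.1.2)).Pairwise (· < ·) :=
      List.pairwise_map.2 (hpair k)
    have hmap : ((Lk k).map (fun p => p.1.2)).Nodup :=
      hmapp.imp (fun {a b} hlt => Nat.ne_of_lt hlt)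
    have hlt : ∀ m ∈ (Lk k).map (fun p => p.1.2), m < N := by
      intro m hm
      rcases List.mem_map.1 hm with ⟨p, hp, rfl⟩
      exact ((runG_bounds DD vA vE D' _ φt env0 0 venv).1 p hp).2
    have hsubN : ((Lk k).map (fun p => p.1.2)).toFinset ⊆ Finset.range N := by
      intro m hm
      exact Finset.mem_range.2 (hlt m (List.mem_toFinset.1 hm))
    calc (Lk k).length = ((Lk k).map (fun p => p.1.2)).length := by simp
      _ = ((Lk k).map (fun p => p.1.2)).toFinset.card := by
          rw [List.toFinset_card_of_nodup hmap]
      _ ≤ (Finset.range N).card := Finset.card_le_card hsubN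
      _ = N := Finset.card_range N
  have hlen : ∀ k, (Lk k).length ≤ (Lk (k + 1)).length := by
    intro k
    calc (Lk k).length = (Lk k).toFinset.card := (List.toFinset_card_of_nodup (hnodup k)).symm
      _ ≤ (Lk (k + 1)).toFinset.card := by
          apply Finset.card_le_card
          intro a ha
          exact List.mem_toFinset.2 (hsub k a (List.mem_toFinset.1 ha))
      _ ≤ (Lk (k + 1)).length := (Lk (k+1)).toFinset_card_le
  have hstep : ∀ k, (∀ j < k, (Lk j).length ≠ (Lk (j + 1)).length) → k ≤ (Lk k).length := by
    intro k
    induction k with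
    | zero => intro _; exact Nat.zero_le _
    | succ k ih =>
        intro h
        have h1 : k ≤ (Lk k).length := ih (fun j hj => h j (Nat.lt_succ_of_lt hj))
        have h2 : (Lk k).length ≠ (Lk (k + 1)).length := h k (Nat.lt_succ_self k)
        have h3 := hlen k
        omega
  have hpig : ∃ j, (Lk j).length = (Lk (j + 1)).length := by
    by_contra hno
    push_neg at hno
    have := hstep (N + 1) (fun j _ => hno j)
    have := hbound (N + 1)
    omega
  obtain ⟨j, hj⟩ := hpig
  have hcard : (Lk (j + 1)).toFinset.card ≤ (Lk j).toFinset.card := by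
    rw [List.toFinset_card_of_nodup (hnodup j), List.toFinset_card_of_nodup (hnodup (j+1))]
    omega
  have hfs : (Lk j).toFinset = (Lk (j + 1)).toFinset := by
    apply Finset.eq_of_subset_of_card_le ?_ hcard
    intro a ha
    exact List.mem_toFinset.2 (hsub j a (List.mem_toFinset.1 ha))
  have hmemiff : ∀ p : Obj × Obj, p ∈ Lk (j + 1) ↔ p ∈ Lk j := by
    intro p
    rw [← List.mem_toFinset, ← List.mem_toFinset (l := Lk j), hfs]
  refine ⟨iter DD vA vE D' φt env0 venv (j + 1), ?_, j, rfl⟩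
  funext o
  have h1 : Fop DD vA vE D' φt env0 venv (iter DD vA vE D' φt env0 venv (j + 1)) o
      = look (Lk (j + 1)) o := rfl
  have h2 : iter DD vA vE D' φt env0 venv (j + 1) o = look (Lk j) o := by
    rw [iter, Function.iterate_succ_apply']
    rfl
  rw [h1, h2]
  exact look_eq_of_mem_iff (hpair (j + 1)) (hpair j) hmemiff o
lemma eval_ground (w : Obj → ℕ → ℤ) (z g v : ℕ → Obj) (t : STm) (hp : t.Pure)
    (hl : ∀ x ∈ t.vars, ∀ i, w (g x) i = vA (v x) i) :
    STm.eval w z (t.ground g) = STm.eval vA v t := by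
  induction t with
  | const c => rfl
  | attr a i =>
      cases a with
      | inl x =>
          simp only [STm.ground, STm.eval]
          exact hl x (by simp [STm.vars]) i
      | inr o => exact hp.elim
  | add t t' ih1 ih2 =>
      simp only [STm.ground, STm.eval]
      rw [ih1 hp.1 (fun x hx => hl x (by simp [STm.vars, hx])),
          ih2 hp.2 (fun x hx => hl x (by simp [STm.vars, hx]))]
  | negt t ih =>
      simp only [STm.ground, STm.eval]
      rw [ih hp (fun x hx => hl x hx)]

lemma FIN (α : Obj → Option Obj) (w : Obj → ℕ → ℤ) (e : Obj → Bool) (z : ℕ → Obj)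
    (hInv : ∀ o d, α o = some d → d ∈ DD ∧ d.1 = o.1 ∧ vE d = true)
    (hw : ∀ o d, α o = some d → ∀ i, w o i = vA d i)
    (he : ∀ o, e o = (α o).isSome) :
    ∀ {ψ : SF}, IsNNF ψ → ψ.Pure → ∀ (g : ℕ → Obj) (n : ℕ) (v : ℕ → Obj),
      SF.Sat DD vA vE v ψ →
      (∀ x ∈ ψ.freeVars, (∀ i, w (g x) i = vA (v x) i) ∧ e (g x) = vE (v x)) →
      (∀ p ∈ runG DD vA vE D' α ψ g n v, α p.1 = some p.2) →
      SF.Sat (∅ : Finset Obj) w e z (G D' ψ g n).1 := by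
  intro ψ hnnf
  induction hnnf with
  | tru => intro _ g n v _ _ _; simp [G, SF.Sat]
  | fls => intro _ g n v hsat _ _; exact absurd hsat (by simp [SF.Sat])
  | eq t t' =>
      intro hp g n v hsat hlink _
      simp only [G]
      show STm.eval w z (t.ground g) = STm.eval w z (t'.ground g)
      rw [eval_ground vA w z g v t hp.1
            (fun x hx i => (hlink x (by simp [SF.freeVars, hx])).1 i),
          eval_ground vA w z g v t' hp.2
            (fun x hx i => (hlink x (by simp [SF.freeVars, hx])).1 i)]
      exact hsat
  | lt t t' =>
      intro hp g n v hsat hlink _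
      simp only [G]
      show STm.eval w z (t.ground g) < STm.eval w z (t'.ground g)
      rw [eval_ground vA w z g v t hp.1
            (fun x hx i => (hlink x (by simp [SF.freeVars, hx])).1 i),
          eval_ground vA w z g v t' hp.2
            (fun x hx i => (hlink x (by simp [SF.freeVars, hx])).1 i)]
      exact hsat
  | ext r =>
      intro hp g n v hsat hlink _
      cases r with
      | inl x =>
          simp only [G]
          show e (g x) = true
          rw [(hlink x (by simp [SF.freeVars])).2]
          exact hsat
      | inr o => exact hp.elim
  | neq t t' =>
      intro hp g n v hsat hlink _
      simp only [G]
      show ¬ (STm.eval w z (t.ground g) = STm.eval w z (t'.ground g))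
      rw [eval_ground vA w z g v t hp.1
            (fun x hx i => (hlink x (by simp [SF.freeVars, hx])).1 i),
          eval_ground vA w z g v t' hp.2
            (fun x hx i => (hlink x (by simp [SF.freeVars, hx])).1 i)]
      exact hsat
  | nlt t t' =>
      intro hp g n v hsat hlink _
      simp only [G]
      show ¬ (STm.eval w z (t.ground g) < STm.eval w z (t'.ground g))
      rw [eval_ground vA w z g v t hp.1
            (fun x hx i => (hlink x (by simp [SF.freeVars, hx])).1 i),
          eval_ground vA w z g v t' hp.2
            (fun x hx i => (hlink x (by simp [SF.freeVars, hx])).1 i)]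
      exact hsat
  | next r =>
      intro hp g n v hsat hlink _
      cases r with
      | inl x =>
          simp only [G]
          show ¬ (e (g x) = true)
          rw [(hlink x (by simp [SF.freeVars])).2]
          exact hsat
      | inr o => exact hp.elim
  | and h1 h2 ih1 ih2 =>
      intro hp g n v hsat hlink hsf
      simp only [G]
      simp only [runG] at hsf
      refine ⟨?_, ?_⟩
      · exact ih1 hp.1 g n v hsat.1
          (fun x hx => hlink x (by simp [SF.freeVars, hx]))
          (fun p hp' => hsf p (List.mem_append.2 (Or.inl hp')))
      · exact ih2 hp.2 g _ v hsat.2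
          (fun x hx => hlink x (by simp [SF.freeVars, hx]))
          (fun p hp' => hsf p (List.mem_append.2 (Or.inr hp')))
  | or h1 h2 ih1 ih2 =>
      rename_i φ₁ φ₂
      intro hp g n v hsat hlink hsf
      simp only [G]
      simp only [runG] at hsf
      by_cases hc : SF.Sat DD vA vE v φ₁
      · rw [if_pos hc] at hsf
        exact Or.inl (ih1 hp.1 g n v hc
          (fun x hx => hlink x (by simp [SF.freeVars, hx])) hsf)
      · rw [if_neg hc] at hsf
        have hsat2 : SF.Sat DD vA vE v φ₂ := by
          rcases hsat with h | h
          · exact absurd h hc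
          · exact h
        exact Or.inr (ih2 hp.2 g _ v hsat2
          (fun x hx => hlink x (by simp [SF.freeVars, hx])) hsf)
  | ex x r hψ ih =>
      rename_i ψ'
      intro hp g n v hsat hlink hsf
      simp only [G]
      have hex : ∃ o, o ∈ DD ∧ o.1 = r ∧ vE o = true ∧
          SF.Sat DD vA vE (Function.update v x o) ψ' := hsat
      simp only [runG] at hsf
      rw [dif_pos hex] at hsf
      have hkey : α (r, n) = some hex.choose := hsf _ (List.mem_cons_self)
      refine ⟨?_, ?_⟩
      · show e (r, n) = true
        rw [he, hkey]
        rfl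
      · refine ih hp (Function.update g x (r, n)) (n + 1)
          (Function.update v x hex.choose) hex.choose_spec.2.2.2 ?_ ?_
        · intro x' hx'
          by_cases hxx : x' = x
          · subst hxx
            simp only [Function.update_self]
            refine ⟨hw _ _ hkey, ?_⟩
            rw [he, hkey, hex.choose_spec.2.2.1]
            rfl
          · simp only [Function.update_of_ne hxx]
            exact hlink x' (by
              simp only [SF.freeVars, Finset.mem_erase]
              exact ⟨hxx, hx'⟩)
        · intro p hp'
          exact hsf p (List.mem_cons.2 (Or.inr hp'))
  | all x r hψ ih =>
      rename_i ψ'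
      intro hp g n v hsat hlink hsf
      rw [G_all]
      rw [runG_all] at hsf
      have hcls : ∀ o ∈ (D'.filter (fun o => o.1 = r)).toList, o.1 = r := by
        intro o ho
        exact (Finset.mem_filter.1 (Finset.mem_toList.1 ho)).2
      have main : ∀ (L' : List Obj), (∀ o ∈ L', o.1 = r) → ∀ (n' : ℕ) (F0 : SF),
          SF.Sat (∅ : Finset Obj) w e z F0 →
          (∀ p ∈ (L'.foldl (rstep DD vA vE D' α ψ' x g v) ([], n')).1,
            α p.1 = some p.2) →
          SF.Sat (∅ : Finset Obj) w e z
            (L'.foldl (gstep D' ψ' x g) (F0, n')).1 := by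
        intro L'
        induction L' with
        | nil => intro _ _ F0 hF0 _; exact hF0
        | cons o t ihL =>
            intro hc n' F0 hF0 hsub
            simp only [List.foldl_cons] at hsub ⊢
            have hstep : rstep DD vA vE D' α ψ' x g v ([], n') o
                = ((match α o with
                    | some d => runG DD vA vE D' α ψ' (Function.update g x o) n'
                        (Function.update v x d)
                    | none => ([] : List (Obj × Obj))),
                   (G D' ψ' (Function.update g x o) n').2) := by
              simp only [rstep]; cases α o <;> simp
            rw [hstep, rfold_fst] at hsub
            refine ihL (fun o' ho' => hc o' (List.mem_cons.2 (Or.inr ho')))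
              _ _ ?_ (fun p hp' => hsub p (List.mem_append.2 (Or.inr hp')))
            show SF.Sat (∅ : Finset Obj) w e z F0 ∧ _
            refine ⟨hF0, ?_⟩
            cases hα : α o with
            | none =>
                refine Or.inl ?_
                show ¬ (e o = true)
                rw [he, hα]
                simp
            | some d =>
                refine Or.inr ?_
                obtain ⟨hd1, hd2, hd3⟩ := hInv o d hα
                refine ih hp (Function.update g x o) n' (Function.update v x d)
                  (hsat d hd1 (by rw [hd2, hc o (List.mem_cons_self)]) hd3) ?_ ?_
                · intro x' hx'
                  by_cases hxx : x' = x
                  · subst hxx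
                    simp only [Function.update_self]
                    refine ⟨hw _ _ hα, ?_⟩
                    rw [he, hα, hd3]
                    rfl
                  · simp only [Function.update_of_ne hxx]
                    exact hlink x' (by
                      simp only [SF.freeVars, Finset.mem_erase]
                      exact ⟨hxx, hx'⟩)
                · intro p hp'
                  refine hsub p (List.mem_append.2 (Or.inl ?_))
                  rw [hα]
                  exact hp'
      exact main _ hcls n .tru (by simp [SF.Sat]) hsf

end Sound

/-- Soundness of the grounding over-approximation: if the quantifier-free
formula `G(φ, D')` is unsatisfiable (no valuation of the attributes and `ext`
flags of the objects satisfies it), then the closed NNF formula `φ` has no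
satisfying solution in any finite domain. -/
theorem grounding_overapprox_sound (φ : SF)
    (hnnf : IsNNF φ) (hpure : φ.Pure) (hclosed : φ.freeVars = ∅)
    (D' : Finset Obj) (env0 : ℕ → Obj)
    (hunsat : ¬ ∃ (wAttr : Obj → ℕ → ℤ) (wExt : Obj → Bool),
        SF.Sat (∅ : Finset Obj) wAttr wExt (fun _ => ((0 : ℕ), (0 : ℕ)))
          (G D' φ env0 0).1) :
    ¬ ∃ (D : Finset Obj) (vAttr : Obj → ℕ → ℤ) (vExt : Obj → Bool)
        (env : ℕ → Obj), SF.Sat D vAttr vExt env φ := by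
  rintro ⟨D, vAttr, vExt, env, hsat⟩
  apply hunsat
  obtain ⟨α, hfix, k, hαk⟩ := exists_fixpoint D vAttr vExt D' φ env0 env
  set w : Obj → ℕ → ℤ := fun o =>
    match α o with
    | some d => vAttr d
    | none => fun _ => 0
    with hwdef
  set e : Obj → Bool := fun o => (α o).isSome with hedef
  have hInv : ∀ o d, α o = some d → d ∈ D ∧ d.1 = o.1 ∧ vExt d = true := by
    intro o d h
    rw [hαk, iter, Function.iterate_succ_apply'] at h
    exact runG_inv D vAttr vExt D' _ φ env0 0 env (o, d) (look_some_mem h)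
  have hw : ∀ o d, α o = some d → ∀ i, w o i = vAttr d i := by
    intro o d h i
    simp only [hwdef, h]
  have he : ∀ o, e o = (α o).isSome := fun _ => rfl
  have hsf : ∀ p ∈ runG D vAttr vExt D' α φ env0 0 env, α p.1 = some p.2 := by
    intro p hp
    conv_lhs => rw [← hfix]
    exact mem_look (run_pairwise D vAttr vExt D' φ env0 env α)
      (by rcases p with ⟨o, d⟩; exact hp)
  refine ⟨w, e, ?_⟩
  exact FIN D vAttr vExt D' α w e (fun _ => ((0 : ℕ), (0 : ℕ))) hInv hw he hnnf hpure
    env0 0 env hsat (by rw [hclosed]; simp) hsf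
end
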